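/- Let n ≥ 4 be even and let σ ∈ S_n be a permutation with exactly two disjoint cycles, i.e. ℓ(σ) = 2 (σ is a product of two disjoint cycles together covering {1,…,n}, counting a fixed point as a cycle of length 1). Then σ admits a transitive factorization into 3-cycles, and the minimal number of 3-cycles in a transitive factorization of σ is n/2. -/

import Mathlib

open Equiv

/-- Number of disjoint cycles of a permutation of `Fin n`, counting each fixed
point as a cycle of length 1. -/
def cycleCount {n : ℕ} (σ : Perm (Fin n)) : ℕ :=
  σ.cycleType.card + (n - σ.support.card)

/-- The subgroup generated by the entries of `L` acts transitively on `Fin n`. -/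
def IsTransitiveFamily {n : ℕ} (L : List (Perm (Fin n))) : Prop :=
  ∀ x y : Fin n, ∃ g ∈ Subgroup.closure {τ | τ ∈ L}, g x = y

/-- `L` is a transitive factorization of `σ` into 3-cycles. -/
def IsTransFact3 {n : ℕ} (σ : Perm (Fin n)) (L : List (Perm (Fin n))) : Prop :=
  (∀ δ ∈ L, δ.IsThreeCycle) ∧ L.prod = σ ∧ IsTransitiveFamily L

open Equiv.Perm List

variable {α : Type*} [DecidableEq α]

lemma formPerm_append_cons' (l : List α) (hl : l ≠ []) (y : α) (r : List α) :
    List.formPerm (l ++ y :: r) =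
      List.formPerm l * Equiv.swap (l.getLast hl) y * List.formPerm (y :: r) := by
  induction l with
  | nil => simp at hl
  | cons a t ih =>
    cases t with
    | nil => simp [List.formPerm_cons_cons]
    | cons b t' =>
      have h' : (b :: t') ≠ [] := List.cons_ne_nil _ _
      have := ih h'
      simp only [List.cons_append, List.formPerm_cons_cons] at this ⊢
      rw [this, List.getLast_cons h']
      group

lemma glue_key (z1 z2 y : α) (r1 r2 : List α) (hy : y ∉ z2 :: r1) :
    List.formPerm (z1 :: z2 :: r1) * List.formPerm (y :: r2) =
      List.formPerm [z1, z2, y] * List.formPerm ((z2 :: r1) ++ (y :: r2)) := by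
  have hne : (z2 :: r1) ≠ [] := List.cons_ne_nil _ _
  rw [formPerm_append_cons' (z2 :: r1) hne y r2]
  have h1 : List.formPerm (z2 :: r1) ((z2 :: r1).getLast hne) = z2 :=
    List.formPerm_apply_getLast _ _
  have h2 : List.formPerm (z2 :: r1) y = y := List.formPerm_apply_of_notMem hy
  have hc : Equiv.swap z2 y =
      List.formPerm (z2 :: r1) * Equiv.swap ((z2 :: r1).getLast hne) y *
        (List.formPerm (z2 :: r1))⁻¹ := by
    have := Equiv.swap_apply_apply (List.formPerm (z2 :: r1)) ((z2 :: r1).getLast hne) y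
    rwa [h1, h2] at this
  have h3 : List.formPerm [z1, z2, y] = Equiv.swap z1 z2 * Equiv.swap z2 y := by
    simp [List.formPerm_cons_cons]
  rw [h3, hc, List.formPerm_cons_cons z1 z2 r1]
  group
  simp [mul_assoc, Equiv.swap_mul_self]

lemma three_of_formPerm [Fintype α] (a b c : α) (h : ([a,b,c] : List α).Nodup) :
    ([a,b,c].formPerm).IsThreeCycle := by
  rw [← card_support_eq_three_iff]
  rw [List.support_formPerm_of_nodup _ h (by
    intro x hx
    have := congrArg List.length hx
    simp at this)]
  rw [List.toFinset_card_of_nodup h]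
  rfl

lemma chain_factor [Fintype α] :
    ∀ (m : ℕ) (z : α) (t : List α), (z :: t).Nodup → t.length = 2 * m →
    ∃ L : List (Perm α),
      (∀ δ ∈ L, δ.IsThreeCycle) ∧
      L.prod = (z :: t).formPerm ∧
      L.length = m ∧
      (∀ x ∈ z :: t, ∃ g ∈ Subgroup.closure {τ : Perm α | τ ∈ L}, g x = z) := by
  intro m
  induction m with
  | zero =>
    intro z t _ ht
    rw [Nat.mul_zero, List.length_eq_zero_iff] at ht
    subst ht
    refine ⟨[], by simp, by simp, rfl, ?_⟩
    intro x hx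
    simp only [List.mem_singleton] at hx
    exact ⟨1, Subgroup.one_mem _, by simp [hx]⟩
  | succ m ih =>
    intro z t hnd ht
    match t, ht with
    | z2 :: z3 :: t', ht =>
      have ht' : t'.length = 2 * m := by
        simp only [List.length_cons] at ht; omega
      have hnd' : (z3 :: t').Nodup := (List.nodup_cons.mp (List.nodup_cons.mp hnd).2).2
      obtain ⟨L', h3', hprod', hlen', hreach'⟩ := ih z3 t' hnd' ht'
      set δ : Perm α := ([z, z2, z3] : List α).formPerm with hδ
      have h1 := List.nodup_cons.mp hnd
      have h2 := List.nodup_cons.mp h1.2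
      have hzz2 : z ≠ z2 := by intro h; exact h1.1 (by simp [h])
      have hzz3 : z ≠ z3 := by intro h; exact h1.1 (by simp [h])
      have hz2z3 : z2 ≠ z3 := by intro h; exact h2.1 (by simp [h])
      have hndz : ([z, z2, z3] : List α).Nodup := by simp [hzz2, hzz3, hz2z3]
      have hδ_eq : δ = Equiv.swap z z2 * Equiv.swap z2 z3 := by
        simp [hδ, List.formPerm_cons_cons]
      have hδz3 : δ z3 = z := by
        rw [hδ_eq]
        simp [Equiv.swap_apply_of_ne_of_ne, hz2z3, Equiv.swap_apply_right]
      have hδz2 : δ z2 = z3 := by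
        rw [hδ_eq]
        simp only [Perm.mul_apply, Equiv.swap_apply_left]
        exact Equiv.swap_apply_of_ne_of_ne (Ne.symm hzz3) (Ne.symm hz2z3)
      refine ⟨δ :: L', ?_, ?_, by simp [hlen'], ?_⟩
      · intro τ hτ
        rcases List.mem_cons.mp hτ with h | h
        · subst h; exact three_of_formPerm _ _ _ hndz
        · exact h3' τ h
      · rw [List.prod_cons, hprod', hδ_eq]
        rw [List.formPerm_cons_cons z z2, List.formPerm_cons_cons z2 z3]
        group
      · have hδmem : δ ∈ Subgroup.closure {τ : Perm α | τ ∈ δ :: L'} :=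
          Subgroup.subset_closure (by simp)
        have hmono : Subgroup.closure {τ : Perm α | τ ∈ L'} ≤
            Subgroup.closure {τ : Perm α | τ ∈ δ :: L'} := by
          apply Subgroup.closure_mono
          intro τ hτ
          simp only [Set.mem_setOf_eq] at hτ ⊢
          exact List.mem_cons_of_mem _ hτ
        intro x hx
        rcases List.mem_cons.mp hx with h | hx'
        · exact ⟨1, Subgroup.one_mem _, by simp [h]⟩
        rcases List.mem_cons.mp hx' with h | hx'' 
        · refine ⟨δ * δ, mul_mem hδmem hδmem, ?_⟩
          simp [h, hδz2, hδz3]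
        · obtain ⟨g, hg, hgx⟩ := hreach' x hx''
          exact ⟨δ * g, mul_mem hδmem (hmono hg), by simp [hgx, hδz3]⟩

def ReachN {α : Type*} [DecidableEq α] [Fintype α] (L : List (Perm α)) (x0 : α) :
    ℕ → α → Prop
  | 0, x => x = x0
  | (m+1), x => ∃ y, ReachN L x0 m y ∧ ∃ τ ∈ L, y ∈ τ.support ∧ x ∈ τ.support

lemma reach_exists {α : Type*} [DecidableEq α] [Fintype α] (L : List (Perm α)) (x0 : α)
    (htrans : ∀ x y : α, ∃ g ∈ Subgroup.closure {τ : Perm α | τ ∈ L}, g x = y) :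
    ∀ x : α, ∃ m, ReachN L x0 m x := by
  have key : ∀ g ∈ Subgroup.closure {τ : Perm α | τ ∈ L},
      ∀ x : α, (∃ m, ReachN L x0 m x) ↔ (∃ m, ReachN L x0 m (g x)) := by
    intro g hg
    induction hg using Subgroup.closure_induction with
    | mem τ hτ =>
      intro x
      by_cases h : τ x = x
      · rw [h]
      · constructor
        · rintro ⟨m, hm⟩
          exact ⟨m + 1, x, hm, τ, hτ, Perm.mem_support.mpr h,
            Perm.mem_support.mpr (by simp [h])⟩
        · rintro ⟨m, hm⟩
          refine ⟨m + 1, τ x, hm, τ, hτ, Perm.mem_support.mpr (by simp [h]),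
            Perm.mem_support.mpr h⟩
    | one => intro x; simp
    | mul a b ha hb iha ihb =>
      intro x
      rw [ihb x, iha (b x)]
      simp
    | inv a ha iha =>
      intro x
      have := iha (a⁻¹ x)
      simp only [Perm.inv_def, Equiv.apply_symm_apply] at this
      exact this.symm
  intro x
  obtain ⟨g, hg, hgx⟩ := htrans x0 x
  have := (key g hg x0).mp ⟨0, rfl⟩
  rwa [hgx] at this

lemma lower_bound {α : Type*} [DecidableEq α] [Fintype α] (L : List (Perm α))
    (h3 : ∀ δ ∈ L, δ.IsThreeCycle)
    (htrans : ∀ x y : α, ∃ g ∈ Subgroup.closure {τ : Perm α | τ ∈ L}, g x = y)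
    (x0 : α) :
    Fintype.card α - 1 ≤ 2 * L.length := by
  classical
  have hne : ∀ x : α, ∃ m, ReachN L x0 m x := reach_exists L x0 htrans
  set d : α → ℕ := fun x => sInf {m | ReachN L x0 m x} with hd_def
  have hd : ∀ x, ReachN L x0 (d x) x := fun x => Nat.sInf_mem (hne x)
  have hdle : ∀ x m, ReachN L x0 m x → d x ≤ m := fun x m hm => Nat.sInf_le hm
  have hsupp : ∀ i : Fin L.length, (L.get i).support.card = 3 := fun i =>
    card_support_eq_three_iff.mpr (h3 _ (L.get_mem ..))
  have hvex : ∀ i : Fin L.length, ∃ v ∈ (L.get i).support,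
      ∀ y ∈ (L.get i).support, d v ≤ d y := by
    intro i
    apply Finset.exists_min_image
    rw [← Finset.card_pos, hsupp i]; norm_num
  choose v hv hvmin using hvex
  by_cases hL0 : L = []
  · subst hL0
    have hcard : Fintype.card α ≤ 1 := by
      rw [Fintype.card_le_one_iff]
      intro a b
      obtain ⟨g, hg, hgab⟩ := htrans a b
      have : g = 1 := by
        have h1 : ({τ : Perm α | τ ∈ ([] : List (Perm α))}) = ∅ := by
          ext τ; simp
        rw [h1, Subgroup.closure_empty, Subgroup.mem_bot] at hg
        exact hg
      rw [this] at hgab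
      simpa using hgab
    simp
    omega
  have hL : 0 < L.length := List.length_pos_iff.mpr hL0
  have step : ∀ x : α, ∃ i : Fin L.length, x ≠ x0 →
      x ∈ (L.get i).support ∧ ∃ y ∈ (L.get i).support, d y < d x := by
    intro x
    by_cases hx : x = x0
    · exact ⟨⟨0, hL⟩, fun h => absurd hx h⟩
    refine ?_
    have h := hd x
    rcases hdx : d x with _ | m
    · rw [hdx] at h
      exact absurd h hx
    · rw [hdx] at h
      obtain ⟨y, hy, τ, hτL, hys, hxs⟩ := h
      obtain ⟨i, hi⟩ := List.mem_iff_get.mp hτL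
      refine ⟨i, fun _ => ⟨by rw [hi]; exact hxs, y, by rw [hi]; exact hys, ?_⟩⟩
      have := hdle y m hy
      omega
  choose ix hix using step
  have hix1 : ∀ x : α, x ≠ x0 → x ∈ (L.get (ix x)).support := fun x hx => (hix x hx).1
  have hix2 : ∀ x : α, x ≠ x0 → ∃ y ∈ (L.get (ix x)).support, d y < d x :=
    fun x hx => (hix x hx).2
  set T : Finset ((_ : Fin L.length) × α) :=
    Finset.univ.sigma (fun i => (L.get i).support.erase (v i)) with hT
  have hcount : (Finset.univ.erase x0).card ≤ T.card := by
    apply Finset.card_le_card_of_injOn (fun x => ⟨ix x, x⟩)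
    · intro x hxs
      have hx : x ≠ x0 := (Finset.mem_erase.mp hxs).1
      show (⟨ix x, x⟩ : (_ : Fin L.length) × α) ∈ T
      rw [hT, Finset.mem_sigma]
      dsimp only
      refine ⟨Finset.mem_univ _, Finset.mem_erase.mpr ⟨?_, hix1 x hx⟩⟩
      intro hxv
      obtain ⟨y, hy, hylt⟩ := hix2 x hx
      have := hvmin (ix x) y hy
      rw [← hxv] at this
      omega
    · intro x _ y _ h
      exact congrArg Sigma.snd h
  have hTcard : T.card = 2 * L.length := by
    rw [hT, Finset.card_sigma]
    have hc : ∀ i : Fin L.length, ((L.get i).support.erase (v i)).card = 2 := by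
      intro i
      rw [Finset.card_erase_of_mem (hv i), hsupp i]
    rw [Finset.sum_congr rfl (fun i _ => hc i)]
    simp [Finset.card_univ, mul_comm]
  have hce : (Finset.univ.erase x0).card = Fintype.card α - 1 := by
    rw [Finset.card_erase_of_mem (Finset.mem_univ _), Finset.card_univ]
  omega

lemma exists_fact_of_decomp {n : ℕ} (hn : 4 ≤ n) (heven : Even n) (σ : Perm (Fin n))
    (z1 z2 y1 : Fin n) (r1 r2 : List (Fin n))
    (hpr : σ = ((z1 :: z2 :: r1) : List (Fin n)).formPerm * ((y1 :: r2) : List (Fin n)).formPerm)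
    (hnd : ((z1 :: z2 :: r1) ++ (y1 :: r2)).Nodup)
    (hlen : ((z1 :: z2 :: r1) ++ (y1 :: r2)).length = n) :
    ∃ L : List (Perm (Fin n)), IsTransFact3 σ L ∧ L.length = n / 2 := by
  classical
  have hnd' : (z1 :: z2 :: (r1 ++ y1 :: r2)).Nodup := by simpa using hnd
  have h1 := List.nodup_cons.mp hnd'
  have h2 := List.nodup_cons.mp h1.2
  have hz1z2 : z1 ≠ z2 := fun h => h1.1 (by simp [h])
  have hy1mem : y1 ∈ r1 ++ y1 :: r2 := by simp
  have hz1y1 : z1 ≠ y1 := fun h => h1.1 (by rw [h]; exact List.mem_cons_of_mem _ hy1mem)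
  have hz2y1 : z2 ≠ y1 := fun h => h2.1 (by rw [h]; exact hy1mem)
  have hy1r1 : y1 ∉ r1 := by
    rcases List.nodup_append'.mp h2.2 with ⟨_, _, hdisj⟩
    intro hy
    exact hdisj hy (by simp)
  have hy1nm : y1 ∉ z2 :: r1 := by
    simp only [List.mem_cons]
    push_neg
    exact ⟨Ne.symm hz2y1, hy1r1⟩
  have hlen' : (r1 ++ y1 :: r2).length = 2 * (n / 2 - 1) := by
    obtain ⟨c, hc⟩ := heven
    simp only [List.length_append, List.length_cons] at hlen ⊢
    omega
  obtain ⟨Lc, hLc3, hLcprod, hLclen, hLcreach⟩ :=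
    chain_factor (n / 2 - 1) z2 (r1 ++ y1 :: r2) h1.2 hlen'
  set δ0 : Perm (Fin n) := ([z1, z2, y1] : List (Fin n)).formPerm with hδ0def
  have hnd3 : ([z1, z2, y1] : List (Fin n)).Nodup := by simp [hz1z2, hz1y1, hz2y1]
  have hδ0eq : δ0 = Equiv.swap z1 z2 * Equiv.swap z2 y1 := by
    simp [hδ0def, List.formPerm_cons_cons]
  have hδ0z2 : δ0 z2 = y1 := by
    rw [hδ0eq]
    simp only [Perm.mul_apply, Equiv.swap_apply_left]
    exact Equiv.swap_apply_of_ne_of_ne (Ne.symm hz1y1) (Ne.symm hz2y1)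
  have hδ0y1 : δ0 y1 = z1 := by
    rw [hδ0eq]
    simp [Equiv.swap_apply_right]
  refine ⟨δ0 :: Lc, ⟨?_, ?_, ?_⟩, ?_⟩
  · intro τ hτ
    rcases List.mem_cons.mp hτ with h | h
    · subst h; exact three_of_formPerm _ _ _ hnd3
    · exact hLc3 τ h
  · rw [List.prod_cons, hLcprod, hpr]
    have := glue_key z1 z2 y1 r1 r2 hy1nm
    rw [this]
    rfl
  · -- transitivity
    have hcov : ∀ x : Fin n, x ∈ z1 :: z2 :: (r1 ++ y1 :: r2) := by
      intro x
      have hcard : (z1 :: z2 :: (r1 ++ y1 :: r2)).toFinset = Finset.univ := by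
        apply Finset.eq_univ_of_card
        rw [List.toFinset_card_of_nodup hnd']
        simp only [List.length_append, List.length_cons] at hlen ⊢
        simp [hlen, Fintype.card_fin]
        omega
      have : x ∈ (z1 :: z2 :: (r1 ++ y1 :: r2)).toFinset := by
        rw [hcard]; exact Finset.mem_univ x
      have h' := List.mem_toFinset.mp this
      simp only [List.mem_cons, List.mem_append] at h' ⊢
      tauto
    have hδ0mem : δ0 ∈ Subgroup.closure {τ : Perm (Fin n) | τ ∈ δ0 :: Lc} :=
      Subgroup.subset_closure (by simp)
    have hmono : Subgroup.closure {τ : Perm (Fin n) | τ ∈ Lc} ≤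
        Subgroup.closure {τ : Perm (Fin n) | τ ∈ δ0 :: Lc} := by
      apply Subgroup.closure_mono
      intro τ hτ
      exact List.mem_cons_of_mem _ hτ
    have hreach : ∀ x : Fin n,
        ∃ g ∈ Subgroup.closure {τ : Perm (Fin n) | τ ∈ δ0 :: Lc}, g x = z1 := by
      intro x
      rcases List.mem_cons.mp (hcov x) with h | h
      · exact ⟨1, Subgroup.one_mem _, by simp [h]⟩
      · obtain ⟨g, hg, hgx⟩ := hLcreach x h
        refine ⟨δ0 * δ0 * g, mul_mem (mul_mem hδ0mem hδ0mem) (hmono hg), ?_⟩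
        simp [hgx, hδ0z2, hδ0y1]
    intro x y
    obtain ⟨gx, hgx, hgxv⟩ := hreach x
    obtain ⟨gy, hgy, hgyv⟩ := hreach y
    refine ⟨gy⁻¹ * gx, mul_mem (inv_mem hgy) hgx, ?_⟩
    rw [Perm.mul_apply, hgxv, ← hgyv, Perm.inv_def, Equiv.symm_apply_apply]
  · simp only [List.length_cons, hLclen]
    omega

lemma exists_cons_cons {β : Type*} {l : List β} (h : 2 ≤ l.length) :
    ∃ a b t, l = a :: b :: t := by
  match l, h with
  | a :: b :: t, _ => exact ⟨a, b, t, rfl⟩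

lemma exists_cons {β : Type*} {l : List β} (h : 1 ≤ l.length) :
    ∃ a t, l = a :: t := by
  match l, h with
  | a :: t, _ => exact ⟨a, t, rfl⟩

lemma exists_decomp {n : ℕ} (hn : 4 ≤ n) (heven : Even n) (σ : Perm (Fin n))
    (hσ : cycleCount σ = 2) :
    ∃ (z1 z2 y1 : Fin n) (r1 r2 : List (Fin n)),
      σ = ((z1 :: z2 :: r1) : List (Fin n)).formPerm * ((y1 :: r2) : List (Fin n)).formPerm ∧
      ((z1 :: z2 :: r1) ++ (y1 :: r2)).Nodup ∧
      ((z1 :: z2 :: r1) ++ (y1 :: r2)).length = n := by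
  classical
  have hσ' : Multiset.card σ.cycleType + (n - σ.support.card) = 2 := hσ
  have hsupple : σ.support.card ≤ n := by
    have := Finset.card_le_univ σ.support
    simpa using this
  have hcard2 : Multiset.card σ.cycleType ≤ 2 := by omega
  interval_cases h : Multiset.card σ.cycleType
  · -- card 0 : σ = 1
    exfalso
    have h1 : σ = 1 := card_cycleType_eq_zero.mp h
    rw [h1] at hσ'
    simp at hσ'
    omega
  · -- card 1 : σ is a cycle with one fixed point
    have hcyc : σ.IsCycle := card_cycleType_eq_one.mp h
    have hsc : σ.support.card = n - 1 := by
      have h2 : 2 ≤ σ.support.card := hcyc.two_le_card_support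
      omega
    have hx0 : σ.support.Nonempty := by
      rw [← Finset.card_pos, hsc]; omega
    obtain ⟨x0, hx0⟩ := hx0
    have hmove : σ x0 ≠ x0 := mem_support.mp hx0
    have hco : σ.cycleOf x0 = σ := hcyc.cycleOf_eq hmove
    set l1 := σ.toList x0 with hl1
    have hform : l1.formPerm = σ := by rw [hl1, Equiv.Perm.formPerm_toList, hco]
    have hlen1 : l1.length = n - 1 := by
      rw [hl1, Equiv.Perm.length_toList, hco, hsc]
    have hcompl : σ.supportᶜ.Nonempty := by
      rw [← Finset.card_pos, Finset.card_compl]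
      simp only [Fintype.card_fin]
      omega
    obtain ⟨y0, hy0c⟩ := hcompl
    have hy0 : y0 ∉ σ.support := Finset.mem_compl.mp hy0c
    have hy0l1 : y0 ∉ l1 := by
      intro hm
      obtain ⟨hsc', hx0'⟩ := Equiv.Perm.mem_toList_iff.mp hm
      apply hy0
      have : y0 ∈ (σ.cycleOf x0).support :=
        Equiv.Perm.mem_support_cycleOf_iff.mpr ⟨hsc', hx0'⟩
      rwa [hco] at this
    have hl1nd : l1.Nodup := Equiv.Perm.nodup_toList σ x0
    obtain ⟨z1, z2, r1, hl⟩ : ∃ z1 z2 r1, l1 = z1 :: z2 :: r1 := by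
      apply exists_cons_cons
      omega
    rw [hl] at hform hy0l1 hl1nd hlen1
    refine ⟨z1, z2, y0, r1, [], ?_, ?_, ?_⟩
    · rw [hform.symm]
      simp
    · rw [List.nodup_append']
      exact ⟨hl1nd, by simp, by
        intro a ha hb
        simp only [List.mem_singleton] at hb
        subst hb
        exact hy0l1 ha⟩
    · simp only [List.length_append, List.length_cons, List.length_nil] at hlen1 ⊢
      omega
  · -- card 2 : two nontrivial cycles covering everything
    have hsupn : σ.support.card = n := by omega
    have hmoveall : ∀ x : Fin n, σ x ≠ x := by
      intro x
      have hu : σ.support = Finset.univ :=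
        Finset.eq_univ_of_card _ (by rw [hsupn]; simp)
      exact mem_support.mp (hu ▸ Finset.mem_univ x)
    have hn0 : 0 < n := by omega
    set x0 : Fin n := ⟨0, hn0⟩ with hx0def
    have hnotc : ¬ σ.IsCycle := by
      intro hc
      rw [← card_cycleType_eq_one] at hc
      omega
    have hcards : σ.cycleFactorsFinset.card = 2 := by
      have hh : Multiset.card σ.cycleType = σ.cycleFactorsFinset.card := by
        rw [Equiv.Perm.cycleType_def, Multiset.card_map]
        rfl
      omega
    have hinj : ∀ a b : Fin n, σ.cycleOf a = σ.cycleOf b → σ.SameCycle a b := by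
      intro a b hab
      have hb : b ∈ (σ.cycleOf b).support :=
        Equiv.Perm.mem_support_cycleOf_iff.mpr
          ⟨Equiv.Perm.SameCycle.refl _ _, mem_support.mpr (hmoveall b)⟩
      rw [← hab] at hb
      exact (Equiv.Perm.mem_support_cycleOf_iff.mp hb).1
    have hy0ex : ∃ y0, ¬ σ.SameCycle x0 y0 := by
      by_contra hall
      push_neg at hall
      apply hnotc
      have hco : σ.cycleOf x0 = σ := by
        ext w
        rw [Equiv.Perm.cycleOf_apply, if_pos (hall w)]
      rw [← hco]
      exact Equiv.Perm.isCycle_cycleOf σ (hmoveall x0)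
    obtain ⟨y0, hny0⟩ := hy0ex
    have hcover : ∀ w, σ.SameCycle x0 w ∨ σ.SameCycle y0 w := by
      by_contra hw
      push_neg at hw
      obtain ⟨w, hw1, hw2⟩ := hw
      have hmem : ∀ z : Fin n, σ.cycleOf z ∈ σ.cycleFactorsFinset := fun z =>
        (Equiv.Perm.cycleOf_mem_cycleFactorsFinset_iff).mpr (mem_support.mpr (hmoveall z))
      have h3 : ({σ.cycleOf x0, σ.cycleOf y0, σ.cycleOf w} : Finset (Perm (Fin n)))
          ⊆ σ.cycleFactorsFinset := by
        intro c hc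
        simp only [Finset.mem_insert, Finset.mem_singleton] at hc
        rcases hc with h | h | h <;> (subst h; exact hmem _)
      have hcard3 : ({σ.cycleOf x0, σ.cycleOf y0, σ.cycleOf w} : Finset (Perm (Fin n))).card
          = 3 := by
        rw [Finset.card_insert_of_notMem, Finset.card_insert_of_notMem,
          Finset.card_singleton]
        · simp only [Finset.mem_singleton]
          intro hc
          exact hw2 (hinj _ _ hc)
        · simp only [Finset.mem_insert, Finset.mem_singleton]
          push_neg
          exact ⟨fun hc => hny0 (hinj _ _ hc), fun hc => hw1 (hinj _ _ hc)⟩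
      have := Finset.card_le_card h3
      omega
    set c1 := σ.cycleOf x0 with hc1
    set c2 := σ.cycleOf y0 with hc2
    have hprod : σ = c1 * c2 := by
      ext w
      rcases hcover w with hxw | hyw
      · have hc2w : c2 w = w := by
          rw [hc2, Equiv.Perm.cycleOf_apply, if_neg]
          intro hyw
          exact hny0 (hxw.trans hyw.symm)
        rw [Perm.mul_apply, hc2w, hc1, Equiv.Perm.cycleOf_apply, if_pos hxw]
      · have hc2w : c2 w = σ w := by
          rw [hc2, Equiv.Perm.cycleOf_apply, if_pos hyw]
        rw [Perm.mul_apply, hc2w, hc1, Equiv.Perm.cycleOf_apply, if_neg]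
        intro hxw
        have : σ.SameCycle x0 w := Equiv.Perm.sameCycle_apply_right.mp hxw
        exact hny0 (this.trans hyw.symm)
    have hdisj : Disjoint c1.support c2.support := by
      rw [Finset.disjoint_left]
      intro a ha1 ha2
      have h1 := (Equiv.Perm.mem_support_cycleOf_iff.mp ha1).1
      have h2 := (Equiv.Perm.mem_support_cycleOf_iff.mp ha2).1
      exact hny0 (h1.trans h2.symm)
    have hunion : c1.support ∪ c2.support = Finset.univ := by
      apply Finset.eq_univ_of_forall
      intro w
      rcases hcover w with hxw | hyw
      · exact Finset.mem_union_left _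
          (Equiv.Perm.mem_support_cycleOf_iff.mpr ⟨hxw, mem_support.mpr (hmoveall x0)⟩)
      · exact Finset.mem_union_right _
          (Equiv.Perm.mem_support_cycleOf_iff.mpr ⟨hyw, mem_support.mpr (hmoveall y0)⟩)
    have hcardsum : c1.support.card + c2.support.card = n := by
      rw [← Finset.card_union_of_disjoint hdisj, hunion]
      simp
    set l1 := σ.toList x0 with hl1
    set l2 := σ.toList y0 with hl2
    have hform1 : l1.formPerm = c1 := Equiv.Perm.formPerm_toList σ x0
    have hform2 : l2.formPerm = c2 := Equiv.Perm.formPerm_toList σ y0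
    have hlen1 : l1.length = c1.support.card := Equiv.Perm.length_toList σ x0
    have hlen2 : l2.length = c2.support.card := Equiv.Perm.length_toList σ y0
    have hc1cyc : c1.IsCycle := Equiv.Perm.isCycle_cycleOf σ (hmoveall x0)
    have hc2cyc : c2.IsCycle := Equiv.Perm.isCycle_cycleOf σ (hmoveall y0)
    have h2le1 : 2 ≤ l1.length := by rw [hlen1]; exact hc1cyc.two_le_card_support
    have h1le2 : 1 ≤ l2.length := by rw [hlen2]; have := hc2cyc.two_le_card_support; omega
    have hndl1 : l1.Nodup := Equiv.Perm.nodup_toList σ x0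
    have hndl2 : l2.Nodup := Equiv.Perm.nodup_toList σ y0
    have hdisjl : ∀ a, a ∈ l1 → a ∈ l2 → False := by
      intro a ha1 ha2
      have h1 := (Equiv.Perm.mem_toList_iff.mp ha1).1
      have h2 := (Equiv.Perm.mem_toList_iff.mp ha2).1
      exact hny0 (h1.trans h2.symm)
    obtain ⟨z1, z2, r1, hl⟩ : ∃ z1 z2 r1, l1 = z1 :: z2 :: r1 := exists_cons_cons h2le1
    obtain ⟨y1, r2, hm⟩ : ∃ y1 r2, l2 = y1 :: r2 := exists_cons h1le2
    rw [hl] at hform1 hndl1 hlen1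
    rw [hm] at hform2 hndl2 hlen2
    refine ⟨z1, z2, y1, r1, r2, ?_, ?_, ?_⟩
    · rw [hform1, hform2, hprod]
    · rw [List.nodup_append']
      refine ⟨hndl1, hndl2, ?_⟩
      intro a ha1 ha2
      exact hdisjl a (hl ▸ ha1) (hm ▸ ha2)
    · rw [List.length_append, hlen1, hlen2, hcardsum]

/-- For even `n ≥ 4`, a permutation `σ` with exactly two disjoint cycles (fixed points
counted as cycles of length 1) admits a transitive factorization into 3-cycles, and
the minimal number of 3-cycles in such a factorization is `n/2`. -/
theorem min_threeCycle_factorization_of_two_cycles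
    (n : ℕ) (hn : 4 ≤ n) (heven : Even n) (σ : Perm (Fin n))
    (hσ : cycleCount σ = 2) :
    (∃ L : List (Perm (Fin n)), IsTransFact3 σ L ∧ L.length = n / 2) ∧
    (∀ L : List (Perm (Fin n)), IsTransFact3 σ L → n / 2 ≤ L.length) := by
  constructor
  · obtain ⟨z1, z2, y1, r1, r2, hpr, hnd, hlen⟩ := exists_decomp hn heven σ hσ
    exact exists_fact_of_decomp hn heven σ z1 z2 y1 r1 r2 hpr hnd hlen
  · rintro L ⟨h3, hprod, htrans⟩
    have hb := lower_bound L h3 htrans ⟨0, by omega⟩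
    rw [Fintype.card_fin] at hb
    obtain ⟨c, hc⟩ := heven
    omega
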